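/- Let A be a finite set and P a real A×A matrix such that I − P_B is invertible for every B ⊆ A; write G_B = (I − P_B)⁻¹ and, for V = {x₁,…,x_k} ⊆ A with A_j = A \ {x₁,…,x_{j−1}}, F_V(A) = ∏_{j=1}^k G_{A_j}(x_j,x_j). Then F_V(A) = det(G_A)/det(G_{A\V}) = det(I − P_{A\V})/det(I − P_A) = det(G̃_V), where G̃_V is the k×k submatrix of G_A with rows and columns indexed by V. In particular F_A(A) = det(G_A) = 1/det(I − P_A). -/

import Mathlib

open Matrix

/-- The principal submatrix of `P` with rows and columns indexed by the subset `B`. -/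
def Matrix.restrictFinset {A : Type*} (P : Matrix A A ℝ) (B : Finset A) :
    Matrix {a // a ∈ B} {a // a ∈ B} ℝ :=
  P.submatrix (fun i => (i : A)) fun j => (j : A)

/-- The diagonal entry `G_B(a,a)` of the Green's function `G_B = (I − P_B)⁻¹`
(by convention `0` if `a ∉ B`). -/
noncomputable def greenDiag {A : Type*} [Fintype A] [DecidableEq A]
    (P : Matrix A A ℝ) (B : Finset A) (a : A) : ℝ :=
  if h : a ∈ B then (1 - P.restrictFinset B)⁻¹ ⟨a, h⟩ ⟨a, h⟩ else 0

/-- For an ordering `x : Fin k → A` of distinct points, `A_j = A \ {x_1,…,x_{j−1}}`. -/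
def avoid {A : Type*} [Fintype A] [DecidableEq A] {k : ℕ} (x : Fin k → A) (j : Fin k) :
    Finset A :=
  Finset.univ \ Finset.image x (Finset.univ.filter fun i => i < j)

/-- `F_V(A) = ∏_{j=1}^k G_{A_j}(x_j,x_j)` for `V = {x₁,…,x_k}`. -/
noncomputable def Ffun {A : Type*} [Fintype A] [DecidableEq A] {k : ℕ}
    (P : Matrix A A ℝ) (x : Fin k → A) : ℝ :=
  ∏ j : Fin k, greenDiag P (avoid x j) (x j)


lemma det_oneSub_reindex {A β γ : Type*} [Fintype γ] [DecidableEq γ] [Fintype β] [DecidableEq β]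
    (P : Matrix A A ℝ) (g : β ≃ γ) (u : γ → A) :
    (1 - P.submatrix (u ∘ g) (u ∘ g)).det = (1 - P.submatrix u u).det := by
  have h : (1 - P.submatrix u u).submatrix g g = 1 - P.submatrix (u ∘ g) (u ∘ g) := by
    ext i j
    simp [Matrix.submatrix, Matrix.one_apply, g.injective.eq_iff]
  rw [← h, Matrix.det_submatrix_equiv_self]

lemma jacobi {α : Type*} [Fintype α] [DecidableEq α] (M : Matrix α α ℝ)
    (hM : IsUnit M) (V : Finset α)
    (hD : IsUnit (M.submatrix (fun i : {a // a ∈ Finset.univ \ V} => (i : α))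
      (fun j : {a // a ∈ Finset.univ \ V} => (j : α)))) :
    (M⁻¹.submatrix (fun i : {a // a ∈ V} => (i : α)) fun j : {a // a ∈ V} => (j : α)).det
      = (M.submatrix (fun i : {a // a ∈ Finset.univ \ V} => (i : α))
          (fun j : {a // a ∈ Finset.univ \ V} => (j : α))).det / M.det := by
  classical
  set cV : {a // a ∈ V} → α := fun i => (i : α)
  set cD : {a // a ∈ Finset.univ \ V} → α := fun i => (i : α)
  let eneg : {a // a ∈ Finset.univ \ V} ≃ {a // ¬ a ∈ V} :=
    Equiv.subtypeEquivRight (by simp)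
  let e : {a // a ∈ V} ⊕ {a // a ∈ Finset.univ \ V} ≃ α :=
    (Equiv.sumCongr (Equiv.refl _) eneg).trans (Equiv.sumCompl (· ∈ V))
  set Ab := M.submatrix cV cV
  set Bb := M.submatrix cV cD
  set Cb := M.submatrix cD cV
  set Db := M.submatrix cD cD
  have hblk : M.submatrix e e = fromBlocks Ab Bb Cb Db := by
    ext (i | i) (j | j) <;> rfl
  haveI iD : Invertible Db := hD.invertible
  haveI iM : Invertible M := hM.invertible
  haveI iN : Invertible (M.submatrix e e) := M.submatrixEquivInvertible e e
  haveI iF : Invertible (fromBlocks Ab Bb Cb Db) := hblk ▸ iN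
  haveI iS : Invertible (Ab - Bb * ⅟Db * Cb) := invertibleOfFromBlocks₂₂Invertible Ab Bb Cb Db
  have h2 : M⁻¹.submatrix e e = (fromBlocks Ab Bb Cb Db)⁻¹ := by
    rw [← hblk, Matrix.inv_submatrix_equiv]
  have h3 : (fromBlocks Ab Bb Cb Db)⁻¹ =
      fromBlocks (⅟(Ab - Bb * ⅟Db * Cb)) (-(⅟(Ab - Bb * ⅟Db * Cb) * Bb * ⅟Db))
        (-(⅟Db * Cb * ⅟(Ab - Bb * ⅟Db * Cb))) (⅟Db + ⅟Db * Cb * ⅟(Ab - Bb * ⅟Db * Cb) * Bb * ⅟Db) := by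
    rw [← Matrix.invOf_eq_nonsing_inv, invOf_fromBlocks₂₂_eq]
  rw [h3] at h2
  have h1 : M⁻¹.submatrix cV cV = ⅟(Ab - Bb * ⅟Db * Cb) := by
    ext i j
    have := congrFun (congrFun h2 (Sum.inl i)) (Sum.inl j)
    simp at this
    simp only [Matrix.invOf_eq_nonsing_inv, Matrix.submatrix_apply]
    exact this
  have hdet : M.det = Db.det * (Ab - Bb * ⅟Db * Cb).det := by
    rw [← Matrix.det_submatrix_equiv_self e, hblk, det_fromBlocks₂₂]
  have hSne : (Ab - Bb * ⅟Db * Cb).det ≠ 0 :=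
    ((Matrix.isUnit_iff_isUnit_det _).mp (isUnit_of_invertible _)).ne_zero
  have hDne : Db.det ≠ 0 :=
    ((Matrix.isUnit_iff_isUnit_det _).mp (isUnit_of_invertible _)).ne_zero
  rw [h1, Matrix.invOf_eq_nonsing_inv, Matrix.det_nonsing_inv, Ring.inverse_eq_inv, hdet]
  rw [div_mul_eq_div_div, div_self hDne, one_div]

section Green
variable {A : Type*} [Fintype A] [DecidableEq A] (P : Matrix A A ℝ)

variable {A : Type*} [Fintype A] [DecidableEq A] (P : Matrix A A ℝ)

set_option linter.unusedSectionVars false in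
lemma restrict_transfer {B C : Finset A} (g : {a // a ∈ B} ≃ {a // a ∈ C})
    (hg : ∀ y, ((g y : A)) = (y : A)) :
    (1 - P.restrictFinset B).det = (1 - P.restrictFinset C).det := by
  have : (fun j : {a // a ∈ C} => (j : A)) ∘ g = fun i : {a // a ∈ B} => (i : A) := by
    funext y; exact hg y
  have h := det_oneSub_reindex P g (fun j : {a // a ∈ C} => (j : A))
  rw [this] at h
  exact h.symm ▸ h

lemma greenDiag_eq (hinv : ∀ B : Finset A, IsUnit (1 - P.restrictFinset B))
    (B : Finset A) (a : A) (ha : a ∈ B) :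
    greenDiag P B a
      = (1 - P.restrictFinset (B.erase a)).det / (1 - P.restrictFinset B).det := by
  classical
  set α := {b // b ∈ B}
  set M : Matrix α α ℝ := 1 - P.restrictFinset B with hM
  set a' : α := ⟨a, ha⟩
  set V : Finset α := {a'}
  -- equiv between the complement-of-singleton subtype and B.erase a
  let g : {y : α // y ∈ Finset.univ \ V} ≃ {b // b ∈ B.erase a} :=
    { toFun := fun y => ⟨(y : α), by
        have h2 := y.2
        simp only [V, Finset.mem_sdiff, Finset.mem_singleton] at h2
        simp only [Finset.mem_erase]
        exact ⟨fun h => h2.2 (Subtype.ext h), (y:α).2⟩⟩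
      invFun := fun c => ⟨⟨(c : A), Finset.mem_of_mem_erase c.2⟩, by
        simp only [V, Finset.mem_sdiff, Finset.mem_singleton, Finset.mem_univ, true_and]
        intro h
        exact (Finset.mem_erase.mp c.2).1 (congrArg Subtype.val h)⟩
      left_inv := fun y => by ext; rfl
      right_inv := fun c => by ext; rfl }
  -- D block equals 1 - restrict to erase
  have hDblock : (M.submatrix (fun i : {y : α // y ∈ Finset.univ \ V} => (i : α))
      (fun j : {y : α // y ∈ Finset.univ \ V} => (j : α)))
      = (1 - P.restrictFinset (B.erase a)).submatrix g g := by
    ext i j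
    have hij : ((i : α) = (j : α)) ↔ (g i = g j) := by
      constructor
      · intro h
        have h' := congrArg (Subtype.val : α → A) h
        exact Subtype.ext h'
      · intro h
        have h' := congrArg (Subtype.val : {b // b ∈ B.erase a} → A) h
        exact Subtype.ext h'
    simp only [hM, Matrix.sub_apply, Matrix.submatrix_apply, Matrix.one_apply,
      Matrix.restrictFinset]
    rw [if_congr hij rfl rfl]
    rfl
  have hDdet : (M.submatrix (fun i : {y : α // y ∈ Finset.univ \ V} => (i : α))
      (fun j : {y : α // y ∈ Finset.univ \ V} => (j : α))).det
      = (1 - P.restrictFinset (B.erase a)).det := by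
    rw [hDblock, Matrix.det_submatrix_equiv_self]
  have hD : IsUnit (M.submatrix (fun i : {y : α // y ∈ Finset.univ \ V} => (i : α))
      (fun j : {y : α // y ∈ Finset.univ \ V} => (j : α))) := by
    rw [Matrix.isUnit_iff_isUnit_det, hDdet, ← Matrix.isUnit_iff_isUnit_det]
    exact hinv _
  have hj := jacobi M (hinv B) V hD
  haveI : Unique {y : α // y ∈ V} :=
    ⟨⟨⟨a', Finset.mem_singleton_self _⟩⟩, fun y => Subtype.ext (Finset.mem_singleton.mp y.2)⟩
  rw [Matrix.det_unique] at hj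
  rw [hDdet] at hj
  have : greenDiag P B a = M⁻¹ a' a' := by simp [greenDiag, ha, hM]; rfl
  rw [this]
  have hd : ((default : {y : α // y ∈ V}) : α) = a' :=
    Finset.mem_singleton.mp (Subtype.prop _)
  rw [Matrix.submatrix_apply, hd] at hj
  exact hj

end Green

lemma det_restrict_univ {A : Type*} [Fintype A] [DecidableEq A] (P : Matrix A A ℝ) :
    (1 - P.restrictFinset Finset.univ).det = (1 - P).det := by
  have h := det_oneSub_reindex P
    (Equiv.subtypeUnivEquiv (fun a : A => Finset.mem_univ a)) (id : A → A)
  have h0 : (id : A → A) ∘ (Equiv.subtypeUnivEquiv (fun a : A => Finset.mem_univ a))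
      = (fun i : {a // a ∈ (Finset.univ : Finset A)} => (i : A)) := rfl
  rw [h0, Matrix.submatrix_id_id] at h
  exact h

lemma Ffun_eq {A : Type*} [Fintype A] [DecidableEq A] (P : Matrix A A ℝ)
    (hinv : ∀ B : Finset A, IsUnit (1 - P.restrictFinset B))
    (hfull : IsUnit (1 - P)) :
    ∀ (k : ℕ) (x : Fin k → A), Function.Injective x →
      Ffun P x = (1 - P.restrictFinset (Finset.univ \ Finset.image x Finset.univ)).det
        / (1 - P).det := by
  have hPne : (1 - P).det ≠ 0 := ((Matrix.isUnit_iff_isUnit_det _).mp hfull).ne_zero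
  intro k
  induction k with
  | zero =>
    intro x _
    have h1 : Finset.image x Finset.univ = (∅ : Finset A) := by
      simp [Finset.univ_eq_empty]
    rw [h1, Finset.sdiff_empty, det_restrict_univ, div_self hPne]
    simp [Ffun]
  | succ k IH =>
    intro x hx
    have hx' : Function.Injective (x ∘ Fin.castSucc) :=
      hx.comp (Fin.castSucc_injective k)
    -- image identities
    have ha : ∀ j : Fin k, Finset.image x (Finset.univ.filter fun i => i < Fin.castSucc j)
        = Finset.image (x ∘ Fin.castSucc) (Finset.univ.filter fun i => i < j) := by
      intro j
      ext a
      simp only [Finset.mem_image, Finset.mem_filter, Finset.mem_univ, true_and,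
        Fin.lt_def, Fin.coe_castSucc, Function.comp_apply]
      constructor
      · rintro ⟨i, hi, rfl⟩
        exact ⟨⟨i.1, by omega⟩, hi, congrArg x (Fin.ext rfl)⟩
      · rintro ⟨i, hi, rfl⟩
        exact ⟨Fin.castSucc i, hi, rfl⟩
    have hb : Finset.image x (Finset.univ.filter fun i => i < Fin.last k)
        = Finset.image (x ∘ Fin.castSucc) Finset.univ := by
      ext a
      simp only [Finset.mem_image, Finset.mem_filter, Finset.mem_univ, true_and,
        Fin.lt_def, Fin.val_last, Function.comp_apply]
      constructor
      · rintro ⟨i, hi, rfl⟩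
        exact ⟨⟨i.1, hi⟩, congrArg x (Fin.ext rfl)⟩
      · rintro ⟨i, rfl⟩
        exact ⟨Fin.castSucc i, i.isLt, rfl⟩
    set B : Finset A := Finset.univ \ Finset.image (x ∘ Fin.castSucc) Finset.univ with hB
    have havoidlast : avoid x (Fin.last k) = B := by
      rw [avoid, hb]
    have hmem : x (Fin.last k) ∈ B := by
      rw [hB]
      simp only [Finset.mem_sdiff, Finset.mem_univ, true_and, Finset.mem_image,
        Finset.mem_univ, Function.comp_apply]
      rintro ⟨i, hi⟩
      have h1 := congrArg Fin.val (hx hi)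
      have h2 := i.isLt
      simp [Fin.val_last] at h1
      omega
    have herase : B.erase (x (Fin.last k)) = Finset.univ \ Finset.image x Finset.univ := by
      ext a
      simp only [Finset.mem_erase, hB, Finset.mem_sdiff, Finset.mem_univ, true_and,
        Finset.mem_image, Function.comp_apply]
      constructor
      · rintro ⟨hne, hnotin⟩ ⟨i, rfl⟩
        rcases Nat.lt_or_ge i.1 k with h | h
        · exact hnotin ⟨⟨i.1, h⟩, congrArg x (Fin.ext rfl)⟩
        · have hil : i = Fin.last k := Fin.ext (by have := i.isLt; simp [Fin.val_last]; omega)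
          exact hne (congrArg x hil)
      · intro hnot
        refine ⟨fun h => hnot ⟨Fin.last k, h.symm⟩, ?_⟩
        rintro ⟨i, rfl⟩
        exact hnot ⟨Fin.castSucc i, rfl⟩
    have hBne : (1 - P.restrictFinset B).det ≠ 0 :=
      ((Matrix.isUnit_iff_isUnit_det _).mp (hinv B)).ne_zero
    -- split the product
    rw [Ffun, Fin.prod_univ_castSucc]
    have hprod : (∏ j : Fin k, greenDiag P (avoid x (Fin.castSucc j)) (x (Fin.castSucc j)))
        = Ffun P (x ∘ Fin.castSucc) := by
      refine Finset.prod_congr rfl fun j _ => ?_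
      have : avoid x (Fin.castSucc j) = avoid (x ∘ Fin.castSucc) j := by
        rw [avoid, avoid, ha j]
      rw [this]
      rfl
    rw [hprod, IH _ hx', havoidlast, greenDiag_eq P hinv B _ hmem, herase]
    field_simp
    ring

/-- With `I − P_B` invertible for all `B ⊆ A`, `G_B = (I − P_B)⁻¹`, and
`V = {x₁,…,x_k}` a set of distinct points of `A`:
`F_V(A) = det G_A / det G_{A\V} = det(I − P_{A\V}) / det(I − P_A) = det G̃_V`,
where `G̃_V` is the submatrix of `G_A` with rows and columns indexed by `V`.
In particular (when `V = A`) `F_A(A) = det G_A = 1 / det(I − P_A)`. -/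
theorem stmt_9 {A : Type*} [Fintype A] [DecidableEq A] (P : Matrix A A ℝ)
    (hinv : ∀ B : Finset A, IsUnit (1 - P.restrictFinset B))
    (hfull : IsUnit (1 - P))
    {k : ℕ} (x : Fin k → A) (hx : Function.Injective x)
    (V : Finset A) (hV : V = Finset.image x Finset.univ) :
    Ffun P x = ((1 - P)⁻¹).det / (1 - P.restrictFinset (Finset.univ \ V))⁻¹.det ∧
    Ffun P x = (1 - P.restrictFinset (Finset.univ \ V)).det / (1 - P).det ∧
    Ffun P x =
      (((1 - P)⁻¹).submatrix (fun i : {a // a ∈ V} => (i : A)) fun j : {a // a ∈ V} => (j : A)).det ∧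
    (V = Finset.univ → Ffun P x = ((1 - P)⁻¹).det ∧ Ffun P x = 1 / (1 - P).det) := by
  have hPne : (1 - P).det ≠ 0 := ((Matrix.isUnit_iff_isUnit_det _).mp hfull).ne_zero
  have hVne : (1 - P.restrictFinset (Finset.univ \ V)).det ≠ 0 :=
    ((Matrix.isUnit_iff_isUnit_det _).mp (hinv _)).ne_zero
  have h2 : Ffun P x = (1 - P.restrictFinset (Finset.univ \ V)).det / (1 - P).det := by
    rw [hV]; exact Ffun_eq P hinv hfull k x hx
  -- D block of (1 - P) equals 1 - restrictFinset
  have hDb : ((1 - P).submatrix (fun i : {a // a ∈ Finset.univ \ V} => (i : A))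
      (fun j : {a // a ∈ Finset.univ \ V} => (j : A)))
      = 1 - P.restrictFinset (Finset.univ \ V) := by
    ext i j
    simp only [Matrix.sub_apply, Matrix.submatrix_apply, Matrix.one_apply,
      Matrix.restrictFinset, Subtype.ext_iff]
  have h3 : Ffun P x = (((1 - P)⁻¹).submatrix (fun i : {a // a ∈ V} => (i : A))
      fun j : {a // a ∈ V} => (j : A)).det := by
    rw [h2, jacobi (1 - P) hfull V (by rw [hDb]; exact hinv _), hDb]
  have h1 : Ffun P x = ((1 - P)⁻¹).det / (1 - P.restrictFinset (Finset.univ \ V))⁻¹.det := by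
    rw [Matrix.det_nonsing_inv, Matrix.det_nonsing_inv, Ring.inverse_eq_inv,
      Ring.inverse_eq_inv, inv_div_inv, h2]
  refine ⟨h1, h2, h3, fun hVuniv => ?_⟩
  subst hVuniv
  have hempty : (Finset.univ \ Finset.univ : Finset A) = ∅ := Finset.sdiff_self _
  haveI : IsEmpty {a // a ∈ (∅ : Finset A)} := ⟨fun y => (Finset.notMem_empty _ y.2)⟩
  have hdet1 : (1 - P.restrictFinset (Finset.univ \ Finset.univ)).det = 1 := by
    rw [hempty]
    exact Matrix.det_isEmpty
  constructor
  · rw [h2, hdet1, Matrix.det_nonsing_inv, Ring.inverse_eq_inv, one_div]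
  · rw [h2, hdet1]
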